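/- Let M be a smooth manifold without boundary of dimension n, let X ⊆ M be the image of a smooth embedding of the closed unit ball B̄ⁿ into M, and let U ⊆ X be a nonempty subset that is open in M. Then there exists a diffeomorphism ψ : M → M with compact support such that ψ(X) ⊆ U. -/

import Mathlib

open Function Set
open scoped Manifold

set_option linter.unusedSectionVars false
set_option linter.unusedVariables false

noncomputable section

section AuxiliaryForStatement10
open scoped ContDiff NNReal


variable {E : Type*} [NormedAddCommGroup E] [InnerProductSpace ℝ E] [CompleteSpace E]

/-- A compactly supported (inside the closed ball of radius `R`) smooth diffeo pair. -/
def NiceDiffeo (R : ℝ) (f finv : E → E) : Prop :=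
  ContDiff ℝ ∞ f ∧ ContDiff ℝ ∞ finv ∧ Function.LeftInverse finv f ∧
    Function.RightInverse finv f ∧ (∀ x, R < ‖x‖ → f x = x) ∧ (∀ x, R < ‖x‖ → finv x = x)

theorem nice_engine (R : ℝ) (u : E → E) (hu : ContDiff ℝ ∞ u)
    (hsupp : ∀ x, R < ‖x‖ → u x = 0) (C : ℝ≥0) (hC : ∀ x, ‖fderiv ℝ u x‖₊ ≤ C)
    (hC1 : (C : ℝ) < 1) :
    ∃ finv, NiceDiffeo R (fun x => x + u x) finv := by
  classical
  have hE : Nonempty E := ⟨0⟩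
  set f : E → E := fun x => x + u x with hf
  have hud : Differentiable ℝ u := hu.differentiable (by norm_num)
  have hulip : LipschitzWith C u := lipschitzWith_of_nnnorm_fderiv_le hud hC
  have hfc : ContDiff ℝ ∞ f := contDiff_id.add hu
  have hinj : Function.Injective f := by
    intro x y hxy
    by_contra hne
    have hxy' : x + u x = y + u y := hxy
    have h1 : x - y = u y - u x := by
      calc x - y = (x + u x) - (u x + y) := by abel
        _ = (y + u y) - (u x + y) := by rw [hxy']
        _ = u y - u x := by abel
    have h2 : ‖x - y‖ ≤ C * ‖x - y‖ := by
      calc ‖x - y‖ = ‖u y - u x‖ := by rw [h1]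
        _ = dist (u y) (u x) := (dist_eq_norm _ _).symm
        _ ≤ C * dist y x := hulip.dist_le_mul y x
        _ = C * ‖x - y‖ := by rw [dist_eq_norm, norm_sub_rev]
    have h3 : (0:ℝ) < ‖x - y‖ := norm_pos_iff.mpr (sub_ne_zero.mpr hne)
    nlinarith
  have hsurj : Function.Surjective f := by
    intro y
    have hT : LipschitzWith C fun x => y - u x := by
      refine LipschitzWith.of_dist_le_mul fun a b => ?_
      calc dist (y - u a) (y - u b) = dist (u a) (u b) := dist_sub_left _ _ _
        _ ≤ C * dist a b := hulip.dist_le_mul a b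
    have hcontr : ContractingWith C fun x => y - u x := ⟨by exact_mod_cast hC1, hT⟩
    obtain ⟨x0, hx0⟩ : ∃ x0 : E, y - u x0 = x0 := ⟨_, hcontr.fixedPoint_isFixedPt⟩
    refine ⟨x0, ?_⟩
    show x0 + u x0 = y
    nth_rewrite 1 [← hx0]
    abel
  have hlt : ∀ x : E, ‖-(fderiv ℝ u x)‖ < 1 := by
    intro x
    rw [norm_neg]
    exact lt_of_le_of_lt (by exact_mod_cast hC x) hC1
  let d : E → (E ≃L[ℝ] E) := fun x =>
    ContinuousLinearEquiv.ofUnit (Units.oneSub (-(fderiv ℝ u x)) (hlt x))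
  have hdco : ∀ x, (d x : E →L[ℝ] E) = ContinuousLinearMap.id ℝ E + fderiv ℝ u x := by
    intro x
    show ((Units.oneSub (-(fderiv ℝ u x)) (hlt x) : (E →L[ℝ] E)ˣ) : E →L[ℝ] E) = _
    rw [Units.val_oneSub, sub_neg_eq_add, ContinuousLinearMap.one_def]
  have hd : ∀ x, HasFDerivAt f ((d x : E →L[ℝ] E)) x := by
    intro x
    rw [hdco x]
    exact (hasFDerivAt_id x).add (hud x).hasFDerivAt
  have hone : (∞ : WithTop ℕ∞) ≠ 0 := by simp
  have hleft : Function.LeftInverse (Function.invFun f) f := Function.leftInverse_invFun hinj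
  have hright : Function.RightInverse (Function.invFun f) f := Function.rightInverse_invFun hsurj
  have hinvsm : ContDiff ℝ ∞ (Function.invFun f) := by
    rw [contDiff_iff_contDiffAt]
    intro y
    obtain ⟨x, rfl⟩ := hsurj y
    have hcd : ContDiffAt ℝ ∞ f x := hfc.contDiffAt
    have hsm := hcd.to_localInverse (f' := d x) (hd x) hone
    have hev : Function.invFun f =ᶠ[nhds (f x)] hcd.localInverse (hd x) hone := by
      have h2 := (hcd.hasStrictFDerivAt' (hd x) hone).eventually_right_inverse
      filter_upwards [h2] with y' hy'
      exact hinj (by rw [Function.rightInverse_invFun hsurj y']; exact hy'.symm)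
    exact hsm.congr_of_eventuallyEq hev
  refine ⟨Function.invFun f, hfc, hinvsm, hleft, hright, ?_, ?_⟩
  · intro x hx; simp only [hf, hsupp x hx, add_zero]
  · intro x hx
    have hfix : f x = x := by simp only [hf, hsupp x hx, add_zero]
    conv_lhs => rw [← hfix]
    exact hleft x

theorem NiceDiffeo.comp {R : ℝ} {f finv g ginv : E → E} (hf : NiceDiffeo R f finv)
    (hg : NiceDiffeo R g ginv) : NiceDiffeo R (f ∘ g) (ginv ∘ finv) := by
  obtain ⟨hf1, hf2, hf3, hf4, hf5, hf6⟩ := hf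
  obtain ⟨hg1, hg2, hg3, hg4, hg5, hg6⟩ := hg
  refine ⟨hf1.comp hg1, hg2.comp hf2, ?_, ?_, ?_, ?_⟩
  · intro x; simp only [Function.comp_apply, hf3 (g x), hg3 x]
  · intro x; simp only [Function.comp_apply, hg4 (finv x), hf4 x]
  · intro x hx; simp only [Function.comp_apply, hg5 x hx, hf5 x hx]
  · intro x hx; simp only [Function.comp_apply, hf6 x hx, hg6 x hx]

theorem NiceDiffeo.id' (R : ℝ) : NiceDiffeo (E := E) R id id :=
  ⟨contDiff_id, contDiff_id, fun _ => rfl, fun _ => rfl, fun _ _ => rfl, fun _ _ => rfl⟩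

theorem NiceDiffeo.iterate {R : ℝ} {f finv : E → E} (h : NiceDiffeo R f finv) (m : ℕ) :
    NiceDiffeo R f^[m] finv^[m] := by
  induction m with
  | zero => exact NiceDiffeo.id' R
  | succ k ih =>
    rw [Function.iterate_succ' f, Function.iterate_succ finv]
    exact h.comp ih

theorem NiceDiffeo.norm_le {R : ℝ} {f finv : E → E} (h : NiceDiffeo R f finv) {x : E}
    (hx : ‖x‖ ≤ R) : ‖f x‖ ≤ R := by
  by_contra hgt
  push_neg at hgt
  have h1 : f (f x) = f x := h.2.2.2.2.1 (f x) hgt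
  have h2 : f x = x := h.2.2.1.injective h1
  rw [h2] at hgt; linarith

section Shrink
variable [FiniteDimensional ℝ E]

theorem support_bound (R : ℝ) (v : E → E) (hv : ContDiff ℝ ∞ v)
    (hs : ∀ x, R < ‖x‖ → v x = 0) : ∃ C : ℝ, 1 ≤ C ∧ ∀ x, ‖fderiv ℝ v x‖ ≤ C := by
  have hsub : Function.support v ⊆ Metric.closedBall 0 R := by
    intro x hx
    rw [Metric.mem_closedBall, dist_zero_right]
    by_contra hgt; push_neg at hgt
    exact hx (hs x hgt)
  have hcs : HasCompactSupport v := by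
    rw [hasCompactSupport_def]
    exact (isCompact_closedBall (0:E) R).of_isClosed_subset isClosed_closure
      (closure_minimal hsub Metric.isClosed_closedBall)
  obtain ⟨C, hC⟩ := (hcs.fderiv ℝ).exists_bound_of_continuous
    (hv.continuous_fderiv (by simp))
  exact ⟨max C 1, le_max_right _ _, fun x => le_trans (hC x) (le_max_left _ _)⟩

/-- The basic smooth bump used everywhere: equal to `1` on the unit ball,
vanishing outside radius `R`. -/
def chi (R : ℝ) (x : E) : ℝ :=
  1 - Real.smoothTransition ((‖x‖ ^ 2 - 1) / (R ^ 2 - 1))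

theorem chi_contDiff {R : ℝ} : ContDiff ℝ ∞ (chi (E := E) R) :=
  contDiff_const.sub (Real.smoothTransition.contDiff.comp
    (((contDiff_norm_sq ℝ).sub contDiff_const).div_const _))

theorem chi_one {R : ℝ} (hR : 1 < R) {x : E} (hx : ‖x‖ ≤ 1) : chi R x = 1 := by
  have h1 : ‖x‖ ^ 2 ≤ 1 := by nlinarith [norm_nonneg x]
  have h2 : (0:ℝ) < R ^ 2 - 1 := by nlinarith
  have : (‖x‖ ^ 2 - 1) / (R ^ 2 - 1) ≤ 0 := div_nonpos_of_nonpos_of_nonneg (by linarith) h2.le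
  simp [chi, Real.smoothTransition.zero_of_nonpos this]

theorem chi_zero {R : ℝ} (hR : 1 < R) {x : E} (hx : R ≤ ‖x‖) : chi R x = 0 := by
  have h2 : (0:ℝ) < R ^ 2 - 1 := by nlinarith
  have h1 : R ^ 2 ≤ ‖x‖ ^ 2 := by nlinarith [norm_nonneg x]
  have : (1:ℝ) ≤ (‖x‖ ^ 2 - 1) / (R ^ 2 - 1) := (one_le_div h2).mpr (by linarith)
  simp [chi, Real.smoothTransition.one_of_one_le this]

theorem chi_mem {R : ℝ} (x : E) : 0 ≤ chi R x ∧ chi R x ≤ 1 := by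
  constructor
  · simp only [chi, sub_nonneg]; exact Real.smoothTransition.le_one _
  · simp only [chi, tsub_le_iff_right, le_add_iff_nonneg_right]
    exact Real.smoothTransition.nonneg _

theorem nice_shrink {q : E} (hq : ‖q‖ < 1) {ε R : ℝ} (hε : 0 < ε) (hR : 1 < R) :
    ∃ f finv : E → E, NiceDiffeo R f finv ∧
      ∀ x ∈ Metric.closedBall (0:E) 1, f x ∈ Metric.ball q ε := by
  have hone : (1 : WithTop ℕ∞) ≤ ∞ := by exact_mod_cast (le_top : (1:ℕ∞) ≤ ⊤)
  set ε2 : ℝ := min (ε/2) ((1 - ‖q‖)/2) with hε2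
  have hε2pos : 0 < ε2 := lt_min (by linarith) (by linarith)
  have hε2ε : ε2 < ε := lt_of_le_of_lt (min_le_left _ _) (by linarith)
  have hqe : ‖q‖ + ε2 ≤ 1 := by
    have := min_le_right (ε/2) ((1 - ‖q‖)/2)
    rw [← hε2] at this; linarith
  -- the scaling part
  set w : E → E := fun x => chi R x • x with hw
  have hwsm : ContDiff ℝ ∞ w := chi_contDiff.smul contDiff_id
  have hwsupp : ∀ x : E, R < ‖x‖ → w x = 0 := by
    intro x hx; simp [hw, chi_zero hR hx.le]
  obtain ⟨C₁, hC₁1, hC₁⟩ := support_bound R w hwsm hwsupp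
  set a : ℝ := 1 / (2 * C₁) with ha
  have hapos : 0 < a := by positivity
  have hahalf : a ≤ 1/2 := by
    rw [ha, div_le_div_iff₀ (by positivity) (by norm_num)]
    nlinarith
  set u₁ : E → E := fun x => (-a) • w x with hu₁
  have hu₁sm : ContDiff ℝ ∞ u₁ := contDiff_const.smul hwsm
  have hu₁supp : ∀ x : E, R < ‖x‖ → u₁ x = 0 := by
    intro x hx; simp [hu₁, hwsupp x hx]
  have hu₁der : ∀ x : E, ‖fderiv ℝ u₁ x‖₊ ≤ (1/2 : ℝ≥0) := by
    intro x
    rw [← NNReal.coe_le_coe, coe_nnnorm]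
    have hdf : fderiv ℝ u₁ x = (-a) • fderiv ℝ w x :=
      fderiv_const_smul ((hwsm.differentiable (by norm_num)) x) _
    rw [hdf, norm_smul, norm_neg, Real.norm_eq_abs, abs_of_pos hapos]
    have : a * ‖fderiv ℝ w x‖ ≤ a * C₁ := by
      apply mul_le_mul_of_nonneg_left (hC₁ x) hapos.le
    have haC : a * C₁ = 1/2 := by
      rw [ha]; field_simp
    push_cast
    linarith
  obtain ⟨finv₁, hN₁⟩ := nice_engine R u₁ hu₁sm hu₁supp (1/2) hu₁der (by norm_num)
  set f₁ : E → E := fun x => x + u₁ x with hf₁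
  have hstep₁ : ∀ x : E, ‖x‖ ≤ 1 → f₁ x = (1 - a) • x := by
    intro x hx
    simp only [hf₁, hu₁, hw, chi_one hR hx, one_smul, smul_smul, mul_one]
    rw [sub_smul, one_smul, neg_smul]
    abel
  have hiter₁ : ∀ m : ℕ, ∀ x : E, ‖x‖ ≤ 1 → ‖f₁^[m] x‖ ≤ (1 - a) ^ m := by
    intro m
    induction m with
    | zero => intro x hx; simpa using hx
    | succ k ih =>
      intro x hx
      rw [Function.iterate_succ_apply']
      have hk : ‖f₁^[k] x‖ ≤ (1-a)^k := ih x hx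
      have hk1 : ‖f₁^[k] x‖ ≤ 1 := hk.trans (pow_le_one₀ (by linarith) (by linarith))
      rw [hstep₁ _ hk1, norm_smul, Real.norm_eq_abs, abs_of_nonneg (by linarith), pow_succ']
      exact mul_le_mul_of_nonneg_left hk (by linarith)
  obtain ⟨m, hm⟩ : ∃ m : ℕ, (1-a)^m < ε2 := exists_pow_lt_of_lt_one hε2pos (by linarith)
  -- the translation part
  set v : E → E := fun x => chi R x • q with hv
  have hvsm : ContDiff ℝ ∞ v := chi_contDiff.smul contDiff_const
  have hvsupp : ∀ x : E, R < ‖x‖ → v x = 0 := by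
    intro x hx; simp [hv, chi_zero hR hx.le]
  obtain ⟨C₂, hC₂1, hC₂⟩ := support_bound R v hvsm hvsupp
  obtain ⟨k, hk⟩ : ∃ k : ℕ, 2 * C₂ < (k : ℝ) := exists_nat_gt _
  have hkpos : 0 < (k:ℝ) := lt_trans (by linarith) hk
  set u₂ : E → E := fun x => (k:ℝ)⁻¹ • v x with hu₂
  have hu₂sm : ContDiff ℝ ∞ u₂ := contDiff_const.smul hvsm
  have hu₂supp : ∀ x : E, R < ‖x‖ → u₂ x = 0 := by
    intro x hx; simp [hu₂, hvsupp x hx]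
  have hu₂der : ∀ x : E, ‖fderiv ℝ u₂ x‖₊ ≤ (1/2 : ℝ≥0) := by
    intro x
    rw [← NNReal.coe_le_coe, coe_nnnorm]
    have hdf : fderiv ℝ u₂ x = (k:ℝ)⁻¹ • fderiv ℝ v x :=
      fderiv_const_smul ((hvsm.differentiable (by norm_num)) x) _
    rw [hdf, norm_smul, Real.norm_eq_abs, abs_of_pos (by positivity)]
    have h1 : (k:ℝ)⁻¹ * ‖fderiv ℝ v x‖ ≤ (k:ℝ)⁻¹ * C₂ :=
      mul_le_mul_of_nonneg_left (hC₂ x) (by positivity)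
    have h2 : (k:ℝ)⁻¹ * C₂ ≤ 1/2 := by
      rw [inv_mul_le_iff₀ hkpos]; linarith
    push_cast
    linarith
  obtain ⟨finv₂, hN₂⟩ := nice_engine R u₂ hu₂sm hu₂supp (1/2) hu₂der (by norm_num)
  set f₂ : E → E := fun x => x + u₂ x with hf₂
  have hstep₂ : ∀ x : E, ‖x‖ ≤ 1 → f₂ x = x + (k:ℝ)⁻¹ • q := by
    intro x hx
    simp only [hf₂, hu₂, hv, chi_one hR hx, one_smul]
  have htrans : ∀ i : ℕ, i ≤ k →
      ∀ x ∈ Metric.closedBall (0:E) ε2, f₂^[i] x ∈ Metric.closedBall (((i:ℝ)/k) • q) ε2 := by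
    intro i
    induction i with
    | zero => intro _ x hx; simpa using hx
    | succ j ih =>
      intro hjk x hx
      have hj : j ≤ k := by omega
      have hmem := ih hj x hx
      rw [Function.iterate_succ_apply']
      set y := f₂^[j] x with hy
      have hyn : ‖y‖ ≤ 1 := by
        rw [Metric.mem_closedBall, dist_eq_norm] at hmem
        have h1 : ‖y‖ ≤ ‖y - ((j:ℝ)/k) • q‖ + ‖((j:ℝ)/k) • q‖ := by
          calc ‖y‖ = ‖(y - ((j:ℝ)/k) • q) + ((j:ℝ)/k) • q‖ := by rw [sub_add_cancel]
            _ ≤ _ := norm_add_le _ _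
        have h2 : ‖((j:ℝ)/k) • q‖ ≤ ‖q‖ := by
          rw [norm_smul, Real.norm_eq_abs, abs_of_nonneg (by positivity)]
          have : (j:ℝ)/k ≤ 1 := by
            rw [div_le_one hkpos]; exact_mod_cast hj
          nlinarith [norm_nonneg q]
        linarith
      rw [hstep₂ y hyn, Metric.mem_closedBall]
      have hsplit : (((j+1:ℕ):ℝ)/k) • q = ((j:ℝ)/k) • q + (k:ℝ)⁻¹ • q := by
        rw [← add_smul]
        congr 1
        push_cast
        field_simp
      rw [hsplit, dist_add_right]
      rw [Metric.mem_closedBall] at hmem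
      exact hmem
  -- assemble
  refine ⟨f₂^[k] ∘ f₁^[m], finv₁^[m] ∘ finv₂^[k], (hN₂.iterate k).comp (hN₁.iterate m), ?_⟩
  intro x hx
  rw [Metric.mem_closedBall, dist_zero_right] at hx
  have h1 : f₁^[m] x ∈ Metric.closedBall (0:E) ε2 := by
    rw [Metric.mem_closedBall, dist_zero_right]
    exact (hiter₁ m x hx).trans hm.le
  have h2 := htrans k le_rfl _ h1
  have hkk : ((k:ℝ)/k) • q = q := by
    rw [div_self hkpos.ne', one_smul]
  rw [hkk] at h2
  rw [Metric.mem_closedBall] at h2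
  simp only [Function.comp_apply, Metric.mem_ball]
  linarith
end Shrink

section ManifoldPart
open scoped Manifold
variable {n : ℕ} {M : Type*} [TopologicalSpace M]
  [ChartedSpace (EuclideanSpace ℝ (Fin n)) M] [IsManifold (𝓡 n) ((⊤ : ℕ∞) : WithTop ℕ∞) M]

theorem loc_inverse (g : EuclideanSpace ℝ (Fin n) → M) (U₀ : Set (EuclideanSpace ℝ (Fin n)))
    (hU₀ : IsOpen U₀) (hg : ContMDiffOn (𝓡 n) (𝓡 n) (⊤ : ℕ∞) g U₀) (hinj : Set.InjOn g U₀)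
    (hder : ∀ x ∈ U₀, Function.Injective (mfderiv (𝓡 n) (𝓡 n) g x))
    {x₀ : EuclideanSpace ℝ (Fin n)} (hx₀ : x₀ ∈ U₀) :
    ∃ s : Set (EuclideanSpace ℝ (Fin n)), IsOpen s ∧ x₀ ∈ s ∧ s ⊆ U₀ ∧
      (∀ O : Set (EuclideanSpace ℝ (Fin n)), IsOpen O → O ⊆ s → IsOpen (g '' O)) ∧
      ∃ f : M → EuclideanSpace ℝ (Fin n),
        ContMDiffAt (𝓡 n) (𝓡 n) (⊤ : ℕ∞) f (g x₀) ∧ ∀ z ∈ s, f (g z) = z := by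
  classical
  have hone : ((⊤ : ℕ∞) : WithTop ℕ∞) ≠ 0 := by
    simp
  set c := chartAt (EuclideanSpace ℝ (Fin n)) (g x₀) with hcdef
  have hgx₀c : g x₀ ∈ c.source := mem_chart_source _ _
  have hgat : ContMDiffAt (𝓡 n) (𝓡 n) (⊤ : ℕ∞) g x₀ := hg.contMDiffAt (hU₀.mem_nhds hx₀)
  have hcat : ContMDiffAt (𝓡 n) (𝓡 n) (⊤ : ℕ∞) (↑c) (g x₀) :=
    contMDiffOn_chart.contMDiffAt (c.open_source.mem_nhds hgx₀c)
  have hGat : ContMDiffAt (𝓡 n) (𝓡 n) (⊤ : ℕ∞) (↑c ∘ g) x₀ := hcat.comp x₀ hgat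
  have hGcd : ContDiffAt ℝ ((⊤ : ℕ∞) : WithTop ℕ∞) (↑c ∘ g) x₀ := hGat.contDiffAt
  have hmdg : MDifferentiableAt (𝓡 n) (𝓡 n) g x₀ := hgat.mdifferentiableAt (by simp)
  have hmdc : MDifferentiableAt (𝓡 n) (𝓡 n) (↑c) (g x₀) :=
    (mdifferentiable_chart (I := 𝓡 n) (g x₀)).mdifferentiableAt hgx₀c
  have hfderivinj : Function.Injective (fderiv ℝ (↑c ∘ g) x₀) := by
    have hcomp : mfderiv (𝓡 n) (𝓡 n) (↑c ∘ g) x₀ =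
        (mfderiv (𝓡 n) (𝓡 n) (↑c) (g x₀)).comp (mfderiv (𝓡 n) (𝓡 n) g x₀) :=
      mfderiv_comp x₀ hmdc hmdg
    rw [← mfderiv_eq_fderiv, hcomp]
    intro a b hab
    exact hder x₀ hx₀
      ((mdifferentiable_chart (I := 𝓡 n) (g x₀)).mfderiv_injective hgx₀c hab)
  have hfsurj : Function.Surjective (fderiv ℝ (↑c ∘ g) x₀) := by
    have := (LinearMap.injective_iff_surjective
      (f := ((fderiv ℝ (↑c ∘ g) x₀ : _ →L[ℝ] _) : _ →ₗ[ℝ] _))).mp (by exact hfderivinj)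
    exact this
  let dlin : EuclideanSpace ℝ (Fin n) ≃ₗ[ℝ] EuclideanSpace ℝ (Fin n) :=
    LinearEquiv.ofBijective ((fderiv ℝ (↑c ∘ g) x₀ : _ →L[ℝ] _) : _ →ₗ[ℝ] _)
      ⟨hfderivinj, hfsurj⟩
  let d : EuclideanSpace ℝ (Fin n) ≃L[ℝ] EuclideanSpace ℝ (Fin n) :=
    dlin.toContinuousLinearEquiv
  have hdco : (d : EuclideanSpace ℝ (Fin n) →L[ℝ] EuclideanSpace ℝ (Fin n)) =
      fderiv ℝ (↑c ∘ g) x₀ := by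
    ext z
    rfl
  have hfd : HasFDerivAt (↑c ∘ g)
      ((d : EuclideanSpace ℝ (Fin n) →L[ℝ] EuclideanSpace ℝ (Fin n))) x₀ := by
    rw [hdco]
    exact (hGcd.differentiableAt hone).hasFDerivAt
  set li := hGcd.localInverse hfd hone with hlidef
  have hlism : ContDiffAt ℝ ((⊤ : ℕ∞) : WithTop ℕ∞) li ((↑c ∘ g) x₀) :=
    hGcd.to_localInverse hfd hone
  have hstrict : HasStrictFDerivAt (↑c ∘ g)
      ((d : EuclideanSpace ℝ (Fin n) →L[ℝ] EuclideanSpace ℝ (Fin n))) x₀ :=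
    hGcd.hasStrictFDerivAt' hfd hone
  set Φ := hstrict.toOpenPartialHomeomorph (↑c ∘ g) with hΦdef
  have hΦcoe : ⇑Φ = ↑c ∘ g := hstrict.toOpenPartialHomeomorph_coe
  have hev : ∀ᶠ z in nhds x₀, li ((↑c ∘ g) z) = z := hstrict.eventually_left_inverse
  have hA : {z | z ∈ U₀ ∧ z ∈ Φ.source ∧ g z ∈ c.source ∧ li ((↑c ∘ g) z) = z} ∈ nhds x₀ := by
    have h1 : U₀ ∈ nhds x₀ := hU₀.mem_nhds hx₀
    have h2 : Φ.source ∈ nhds x₀ :=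
      Φ.open_source.mem_nhds hstrict.mem_toOpenPartialHomeomorph_source
    have h3 : g ⁻¹' c.source ∈ nhds x₀ :=
      hgat.continuousAt.preimage_mem_nhds (c.open_source.mem_nhds hgx₀c)
    filter_upwards [h1, h2, h3, hev] with z hz1 hz2 hz3 hz4
    exact ⟨hz1, hz2, hz3, hz4⟩
  refine ⟨interior {z | z ∈ U₀ ∧ z ∈ Φ.source ∧ g z ∈ c.source ∧ li ((↑c ∘ g) z) = z},
    isOpen_interior, mem_interior_iff_mem_nhds.mpr hA, ?_, ?_, ?_⟩
  · exact fun z hz => (interior_subset hz).1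
  · intro O hO hOs
    have hOΦ : O ⊆ Φ.source := fun z hz => (interior_subset (hOs hz)).2.1
    have h1 : IsOpen (Φ '' O) := Φ.isOpen_image_of_subset_source hO hOΦ
    have h2 : Φ '' O ⊆ c.target := by
      rintro _ ⟨z, hz, rfl⟩
      rw [hΦcoe]
      exact c.map_source (interior_subset (hOs hz)).2.2.1
    have h3 : IsOpen (c.symm '' (Φ '' O)) :=
      c.symm.isOpen_image_of_subset_source h1 (by rwa [OpenPartialHomeomorph.symm_source])
    have h4 : c.symm '' (Φ '' O) = g '' O := by
      rw [Set.image_image]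
      apply Set.image_congr
      intro z hz
      rw [hΦcoe]
      exact c.left_inv (interior_subset (hOs hz)).2.2.1
    rwa [h4] at h3
  · refine ⟨li ∘ ⇑c, ?_, ?_⟩
    · have hlis : ContMDiffAt (𝓡 n) (𝓡 n) (⊤ : ℕ∞) li (c (g x₀)) := hlism.contMDiffAt
      exact hlis.comp (g x₀) hcat
    · intro z hz
      exact (interior_subset hz).2.2.2
end ManifoldPart

section ManifoldPart2
open scoped Manifold
variable {n : ℕ} {M : Type*} [TopologicalSpace M]
  [ChartedSpace (EuclideanSpace ℝ (Fin n)) M] [IsManifold (𝓡 n) ((⊤ : ℕ∞) : WithTop ℕ∞) M]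

theorem open_image (g : EuclideanSpace ℝ (Fin n) → M) (U₀ : Set (EuclideanSpace ℝ (Fin n)))
    (hU₀ : IsOpen U₀) (hg : ContMDiffOn (𝓡 n) (𝓡 n) (⊤ : ℕ∞) g U₀) (hinj : Set.InjOn g U₀)
    (hder : ∀ x ∈ U₀, Function.Injective (mfderiv (𝓡 n) (𝓡 n) g x))
    (O : Set (EuclideanSpace ℝ (Fin n))) (hO : IsOpen O) (hOU : O ⊆ U₀) :
    IsOpen (g '' O) := by
  rw [isOpen_iff_forall_mem_open]
  rintro _ ⟨z, hz, rfl⟩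
  obtain ⟨s, hs_open, hzs, hsU, himg, -⟩ := loc_inverse g U₀ hU₀ hg hinj hder (hOU hz)
  exact ⟨g '' (O ∩ s), Set.image_mono Set.inter_subset_left,
    himg (O ∩ s) (hO.inter hs_open) Set.inter_subset_right, ⟨z, ⟨hz, hzs⟩, rfl⟩⟩
end ManifoldPart2

end AuxiliaryForStatement10

/-- `X` is the image of a smooth embedding of the closed unit ball `B̄ⁿ` into the manifold
`M`: there is a smooth map `g` defined on an open neighborhood of `B̄ⁿ ⊆ ℝⁿ`, injective
there, with everywhere injective differential, such that `X = g(B̄ⁿ)`. -/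
def IsBallImageIn (n : ℕ) {M : Type*} [TopologicalSpace M]
    [ChartedSpace (EuclideanSpace ℝ (Fin n)) M] [IsManifold (𝓡 n) ((⊤ : ℕ∞) : WithTop ℕ∞) M]
    (X : Set M) : Prop :=
  ∃ (U : Set (EuclideanSpace ℝ (Fin n))) (g : EuclideanSpace ℝ (Fin n) → M),
    IsOpen U ∧ Metric.closedBall 0 1 ⊆ U ∧
    ContMDiffOn (𝓡 n) (𝓡 n) (⊤ : ℕ∞) g U ∧ Set.InjOn g U ∧
    (∀ x ∈ U, Function.Injective (mfderiv (𝓡 n) (𝓡 n) g x)) ∧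
    X = g '' Metric.closedBall 0 1

/-- `ψ` is a diffeomorphism of the manifold `M` with compact support: it is smooth, has a
smooth two-sided inverse, and the closure of `{x : ψ x ≠ x}` is compact. -/
def IsCSDiffeoM (n : ℕ) {M : Type*} [TopologicalSpace M]
    [ChartedSpace (EuclideanSpace ℝ (Fin n)) M] [IsManifold (𝓡 n) ((⊤ : ℕ∞) : WithTop ℕ∞) M]
    (ψ : M → M) : Prop :=
  ContMDiff (𝓡 n) (𝓡 n) (⊤ : ℕ∞) ψ ∧
  (∃ ψinv : M → M, ContMDiff (𝓡 n) (𝓡 n) (⊤ : ℕ∞) ψinv ∧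
    Function.LeftInverse ψinv ψ ∧ Function.RightInverse ψinv ψ) ∧
  IsCompact (closure {x : M | ψ x ≠ x})

/-- If `X ⊆ M` is an embedded closed ball in a smooth `n`-manifold without
boundary and `U ⊆ X` is a nonempty subset open in `M`, then some compactly supported
diffeomorphism of `M` maps `X` into `U`. -/
theorem statement10 (n : ℕ) {M : Type*} [TopologicalSpace M] [T2Space M]
    [ChartedSpace (EuclideanSpace ℝ (Fin n)) M] [IsManifold (𝓡 n) ((⊤ : ℕ∞) : WithTop ℕ∞) M]
    (X : Set M) (hX : IsBallImageIn n X)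
    (U : Set M) (hUX : U ⊆ X) (hU : IsOpen U) (hUne : U.Nonempty) :
    ∃ ψ : M → M, IsCSDiffeoM n ψ ∧ ψ '' X ⊆ U := by
  classical
  obtain ⟨U₀, g, hU₀, hB, hg, hginj, hgder, hXdef⟩ := hX
  subst hXdef
  -- a radius ρ > 1 with the closed ball of radius ρ inside U₀
  obtain ⟨δ, hδpos, hδ⟩ :=
    (isCompact_closedBall (0 : EuclideanSpace ℝ (Fin n)) 1).exists_cthickening_subset_open hU₀ hB
  set ρ : ℝ := δ + 1 with hρdef
  have hρ1 : 1 < ρ := by simp only [hρdef]; linarith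
  have hρU : Metric.closedBall (0 : EuclideanSpace ℝ (Fin n)) ρ ⊆ U₀ := by
    rw [← cthickening_closedBall hδpos.le zero_le_one (0 : EuclideanSpace ℝ (Fin n))]
    exact hδ
  -- a point q in the open unit ball whose image lies in U
  obtain ⟨y₀, hy₀U⟩ := hUne
  obtain ⟨x₁, hx₁B, hx₁⟩ := hUX hy₀U
  set V := U₀ ∩ g ⁻¹' U with hVdef
  have hVopen : IsOpen V := hg.continuousOn.isOpen_inter_preimage hU₀ hU
  have hx₁V : x₁ ∈ V := ⟨hB hx₁B, by rw [Set.mem_preimage, hx₁]; exact hy₀U⟩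
  obtain ⟨q, hqV, hqnorm⟩ : ∃ q, q ∈ V ∧ ‖q‖ < 1 := by
    rw [mem_closedBall_zero_iff] at hx₁B
    rcases lt_or_eq_of_le hx₁B with hlt | heq
    · exact ⟨x₁, hx₁V, hlt⟩
    · obtain ⟨r, hrpos, hball⟩ := Metric.isOpen_iff.mp hVopen x₁ hx₁V
      set t := min r 1 with htdef
      have htpos : 0 < t := lt_min hrpos one_pos
      have ht1 : t ≤ 1 := min_le_right _ _
      have htr : t ≤ r := min_le_left _ _
      refine ⟨(1 - t/2) • x₁, hball ?_, ?_⟩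
      · rw [Metric.mem_ball, dist_eq_norm]
        have hsub : (1 - t/2) • x₁ - x₁ = (-(t/2)) • x₁ := by module
        rw [hsub, norm_smul, Real.norm_eq_abs, heq, mul_one, abs_neg,
          abs_of_nonneg (by linarith)]
        linarith
      · rw [norm_smul, Real.norm_eq_abs, heq, mul_one, abs_of_nonneg (by linarith)]
        linarith
  obtain ⟨ε, hεpos, hεball⟩ := Metric.isOpen_iff.mp hVopen q hqV
  -- the Euclidean shrinking diffeomorphism
  set R₁ : ℝ := (1 + ρ)/2 with hR₁def
  have hR₁1 : 1 < R₁ := by simp only [hR₁def]; linarith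
  have hR₁ρ : R₁ < ρ := by simp only [hR₁def]; linarith
  obtain ⟨h, hinv, hN, himg⟩ := nice_shrink (E := EuclideanSpace ℝ (Fin n)) hqnorm hεpos hR₁1
  have hNsymm : NiceDiffeo R₁ hinv h :=
    ⟨hN.2.1, hN.1, hN.2.2.2.1, hN.2.2.1, hN.2.2.2.2.2, hN.2.2.2.2.1⟩
  have hball_sub_U₀ : Metric.ball (0 : EuclideanSpace ℝ (Fin n)) ρ ⊆ U₀ :=
    Metric.ball_subset_closedBall.trans hρU
  have hmap : ∀ (h' : EuclideanSpace ℝ (Fin n) → EuclideanSpace ℝ (Fin n))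
      (hinv' : EuclideanSpace ℝ (Fin n) → EuclideanSpace ℝ (Fin n)), NiceDiffeo R₁ h' hinv' →
      ∀ x ∈ Metric.ball (0 : EuclideanSpace ℝ (Fin n)) ρ,
        h' x ∈ Metric.ball (0 : EuclideanSpace ℝ (Fin n)) ρ := by
    intro h' hinv' hN' x hx
    rw [mem_ball_zero_iff]
    by_cases hxR : ‖x‖ ≤ R₁
    · exact lt_of_le_of_lt (hN'.norm_le hxR) hR₁ρ
    · push_neg at hxR
      rw [hN'.2.2.2.2.1 x hxR]
      rwa [mem_ball_zero_iff] at hx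
  set ginv := Function.invFunOn g U₀ with hginvdef
  have hginvleft : ∀ z ∈ U₀, ginv (g z) = z := fun z hz => hginj.leftInvOn_invFunOn hz
  set Ω := g '' Metric.ball (0 : EuclideanSpace ℝ (Fin n)) ρ with hΩdef
  have hΩopen : IsOpen Ω :=
    open_image g U₀ hU₀ hg hginj hgder _ Metric.isOpen_ball hball_sub_U₀
  set K := g '' Metric.closedBall (0 : EuclideanSpace ℝ (Fin n)) R₁ with hKdef
  have hKcompact : IsCompact K :=
    (isCompact_closedBall _ _).image_of_continuousOn
      (hg.continuousOn.mono ((Metric.closedBall_subset_closedBall hR₁ρ.le).trans hρU))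
  have hKclosed : IsClosed K := hKcompact.isClosed
  have hKΩ : K ⊆ Ω := Set.image_mono (Metric.closedBall_subset_ball hR₁ρ)
  -- the pieces and pointwise identities, for a generic pair
  have hψval : ∀ (h' : EuclideanSpace ℝ (Fin n) → EuclideanSpace ℝ (Fin n)),
      ∀ z ∈ Metric.ball (0 : EuclideanSpace ℝ (Fin n)) ρ,
      (if g z ∈ Ω then g (h' (ginv (g z))) else g z) = g (h' z) := by
    intro h' z hz
    rw [if_pos ⟨z, hz, rfl⟩, hginvleft z (hball_sub_U₀ hz)]
  have hψid : ∀ (h' hinv' : EuclideanSpace ℝ (Fin n) → EuclideanSpace ℝ (Fin n)),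
      NiceDiffeo R₁ h' hinv' → ∀ y ∉ K,
      (if y ∈ Ω then g (h' (ginv y)) else y) = y := by
    intro h' hinv' hN' y hyK
    by_cases hyΩ : y ∈ Ω
    · obtain ⟨z, hz, rfl⟩ := hyΩ
      rw [hψval h' z hz]
      have hzR : R₁ < ‖z‖ := by
        by_contra hle
        push_neg at hle
        exact hyK ⟨z, mem_closedBall_zero_iff.mpr hle, rfl⟩
      rw [hN'.2.2.2.2.1 z hzR]
    · exact if_neg hyΩ
  -- smoothness of the glued map
  have hsmooth : ∀ (h' hinv' : EuclideanSpace ℝ (Fin n) → EuclideanSpace ℝ (Fin n)),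
      NiceDiffeo R₁ h' hinv' →
      ContMDiff (𝓡 n) (𝓡 n) (⊤ : ℕ∞) (fun y => if y ∈ Ω then g (h' (ginv y)) else y) := by
    intro h' hinv' hN'
    intro y₀
    by_cases hy₀ : y₀ ∈ Ω
    · obtain ⟨x₀, hx₀, rfl⟩ := hy₀
      obtain ⟨s, hsopen, hx₀s, hsU, hopen, f, hfsm, hfinv⟩ :=
        loc_inverse g U₀ hU₀ hg hginj hgder (hball_sub_U₀ hx₀)
      have hs'open : IsOpen (s ∩ Metric.ball (0 : EuclideanSpace ℝ (Fin n)) ρ) :=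
        hsopen.inter Metric.isOpen_ball
      have hΩ' : IsOpen (g '' (s ∩ Metric.ball (0 : EuclideanSpace ℝ (Fin n)) ρ)) :=
        hopen _ hs'open Set.inter_subset_left
      have hmem : g x₀ ∈ g '' (s ∩ Metric.ball (0 : EuclideanSpace ℝ (Fin n)) ρ) :=
        ⟨x₀, ⟨hx₀s, hx₀⟩, rfl⟩
      have hev : (fun y => if y ∈ Ω then g (h' (ginv y)) else y) =ᶠ[nhds (g x₀)]
          fun y => g (h' (f y)) := by
        filter_upwards [hΩ'.mem_nhds hmem] with y hy
        obtain ⟨z, hz, rfl⟩ := hy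
        rw [hψval h' z hz.2, hfinv z hz.1]
      refine ContMDiffAt.congr_of_eventuallyEq ?_ hev
      have hfx : f (g x₀) = x₀ := hfinv x₀ hx₀s
      have h2 : ContMDiffAt (𝓡 n) (𝓡 n) (⊤ : ℕ∞) h' x₀ :=
        (contMDiff_iff_contDiff.mpr hN'.1).contMDiffAt
      have h3 : ContMDiffAt (𝓡 n) (𝓡 n) (⊤ : ℕ∞) g (h' x₀) :=
        hg.contMDiffAt (hU₀.mem_nhds (hball_sub_U₀ (hmap h' hinv' hN' x₀ hx₀)))
      have hcomp1 : ContMDiffAt (𝓡 n) (𝓡 n) (⊤ : ℕ∞) (g ∘ h') x₀ := h3.comp x₀ h2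
      have hcomp1' : ContMDiffAt (𝓡 n) (𝓡 n) (⊤ : ℕ∞) (g ∘ h') (f (g x₀)) := by
        rw [hfx]; exact hcomp1
      exact hcomp1'.comp (g x₀) hfsm
    · have hy₀K : y₀ ∉ K := fun hc => hy₀ (hKΩ hc)
      have hev : (fun y => if y ∈ Ω then g (h' (ginv y)) else y) =ᶠ[nhds y₀] id := by
        filter_upwards [hKclosed.isOpen_compl.mem_nhds hy₀K] with y hy
        exact hψid h' hinv' hN' y hy
      exact ContMDiffAt.congr_of_eventuallyEq contMDiffAt_id hev
  set ψ : M → M := fun y => if y ∈ Ω then g (h (ginv y)) else y with hψdef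
  set ψi : M → M := fun y => if y ∈ Ω then g (hinv (ginv y)) else y with hψidef
  have hleft : Function.LeftInverse ψi ψ := by
    intro y
    by_cases hyΩ : y ∈ Ω
    · obtain ⟨z, hz, rfl⟩ := hyΩ
      have h1 : ψ (g z) = g (h z) := hψval h z hz
      have h2 : ψi (g (h z)) = g (hinv (h z)) := hψval hinv (h z) (hmap h hinv hN z hz)
      rw [h1, h2, hN.2.2.1 z]
    · have h1 : ψ y = y := if_neg hyΩ
      have h2 : ψi y = y := if_neg hyΩ
      rw [h1, h2]
  have hright : Function.RightInverse ψi ψ := by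
    intro y
    by_cases hyΩ : y ∈ Ω
    · obtain ⟨z, hz, rfl⟩ := hyΩ
      have h1 : ψi (g z) = g (hinv z) := hψval hinv z hz
      have h2 : ψ (g (hinv z)) = g (h (hinv z)) := hψval h (hinv z) (hmap hinv h hNsymm z hz)
      rw [h1, h2, hN.2.2.2.1 z]
    · have h1 : ψ y = y := if_neg hyΩ
      have h2 : ψi y = y := if_neg hyΩ
      rw [h2, h1]
  refine ⟨ψ, ⟨hsmooth h hinv hN, ⟨ψi, hsmooth hinv h hNsymm, hleft, hright⟩, ?_⟩, ?_⟩
  · have hsub : {y : M | ψ y ≠ y} ⊆ K := by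
      intro y hy
      by_contra hyK
      exact hy (hψid h hinv hN y hyK)
    exact hKcompact.of_isClosed_subset isClosed_closure (closure_minimal hsub hKclosed)
  · rintro _ ⟨_, ⟨z, hzB, rfl⟩, rfl⟩
    have hzρ : z ∈ Metric.ball (0 : EuclideanSpace ℝ (Fin n)) ρ := by
      rw [mem_ball_zero_iff]
      exact lt_of_le_of_lt (mem_closedBall_zero_iff.mp hzB) hρ1
    have h1 : ψ (g z) = g (h z) := hψval h z hzρ
    rw [h1]
    exact (hεball (himg z hzB)).2
end
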